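/- Let 1 < p < ∞ and let φ ∈ L^p(Q;ℝ^m) with ∫_Q φ dx = 0, extended periodically in the first N-1 variables. Define w_k(x) := (2k+1)^{1/p} φ((2k+1)x) for |x_N| ≤ 1/(2(2k+1)) and w_k(x) := 0 otherwise. Then {w_k} is bounded in L^p(Q;ℝ^m) and w_k ⇀ 0 weakly in L^p(Q;ℝ^m) as k → ∞. -/

import Mathlib

open MeasureTheory Filter
open scoped RealInnerProductSpace ENNReal NNReal Pointwise
section Aux

abbrev Ee (n : ℕ) := EuclideanSpace ℝ (Fin n)

lemma hyperplane_null (n : ℕ) (i : Fin n) (a : ℝ) :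
    volume {y : Ee n | y i = a} = 0 := by
  have h0 : volume {y : Ee n | y i = 0} = 0 := by
    have : {y : Ee n | y i = 0}
        = (LinearMap.ker (EuclideanSpace.proj i (𝕜 := ℝ)).toLinearMap : Set (Ee n)) := by
      ext y; simp [LinearMap.mem_ker]
    rw [this]
    apply Measure.addHaar_submodule
    intro h
    have h1 : (EuclideanSpace.single i (1:ℝ)) ∈
        LinearMap.ker (EuclideanSpace.proj i (𝕜 := ℝ)).toLinearMap := by
      rw [h]; trivial
    rw [LinearMap.mem_ker] at h1
    simp at h1
  have : {y : Ee n | y i = a}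
      = (· + EuclideanSpace.single i (-a)) ⁻¹' {y : Ee n | y i = 0} := by
    ext y
    simp only [Set.mem_preimage, Set.mem_setOf_eq, PiLp.add_apply, EuclideanSpace.single_apply,
      if_pos rfl, if_true]
    constructor <;> intro h <;> linarith
  rw [this, measure_preimage_add_right]
  exact h0

def Bx {n : ℕ} (b : Fin n → ℝ) : Set (Ee n) := {y | ∀ i, |y i| < b i}

lemma Bx_meas {n : ℕ} (b : Fin n → ℝ) : MeasurableSet (Bx b) := by
  have : Bx b = ⋂ i, (fun y : Ee n => |y i|) ⁻¹' Set.Iio (b i) := by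
    ext y; simp [Bx]
  rw [this]
  exact MeasurableSet.iInter fun i => (((measurable_pi_apply i).comp (WithLp.measurable_ofLp 2 _)).abs) measurableSet_Iio

lemma translate_lintegral {n : ℕ} (h : Ee n → ℝ≥0∞) (hh : Measurable h)
    (A : Set (Ee n)) (hA : MeasurableSet A) (v : Ee n) :
    ∫⁻ y in (· - v) ⁻¹' A, h y = ∫⁻ y in A, h (y + v) := by
  have hmap : Measure.map (· - v) (volume : Measure (Ee n)) = volume :=
    map_sub_right_eq_self volume v
  calc ∫⁻ y in (· - v) ⁻¹' A, h y = ∫⁻ y in (· - v) ⁻¹' A, h ((y - v) + v) := by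
        apply setLIntegral_congr_fun (hA.preimage (measurable_sub_const v))
        intro y _; simp only [sub_add_cancel]
    _ = ∫⁻ y in A, h (y + v) := by
        have := setLIntegral_map (μ := (volume : Measure (Ee n))) hA
          (f := fun z => h (z + v)) (hh.comp (measurable_add_const v)) (measurable_sub_const v)
        rw [hmap] at this
        exact this.symm

lemma step_lemma {n : ℕ} (k : ℕ) (h : Ee n → ℝ≥0∞) (hh : Measurable h) (j : Fin n)
    (hper : ∀ (t : ℤ) (y : Ee n), h (y + (t : ℝ) • EuclideanSpace.single j 1) = h y)
    (b : Fin n → ℝ) (hbj : b j = 1 / 2) :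
    ∫⁻ y in Bx (Function.update b j ((2 * (k : ℝ) + 1) / 2)), h y
      = (2 * k + 1 : ℝ≥0∞) * ∫⁻ y in Bx b, h y := by
  set v : ℤ → Ee n := fun t => (t : ℝ) • EuclideanSpace.single j 1 with hv_def
  have hv : ∀ (t : ℤ) (i : Fin n), v t i = if i = j then (t : ℝ) else 0 := by
    intro t i
    simp [hv_def, PiLp.smul_apply, EuclideanSpace.single_apply, smul_eq_mul, mul_ite]
  set U : ℤ → Set (Ee n) := fun t => (· - v t) ⁻¹' Bx b with hU_def
  have memU : ∀ (t : ℤ) (y : Ee n), y ∈ U t ↔ ∀ i, |y i - (if i = j then (t : ℝ) else 0)| < b i := by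
    intro t y
    constructor <;> intro hy i <;>
      simpa [hU_def, Bx, PiLp.sub_apply, hv t i] using hy i
  have hUmeas : ∀ t : ℤ, MeasurableSet (U t) :=
    fun t => (Bx_meas b).preimage (measurable_sub_const (v t))
  have hdisj : (↑(Finset.Icc (-(k:ℤ)) k) : Set ℤ).PairwiseDisjoint U := by
    intro t _ t' _ hne
    rw [Function.onFun, Set.disjoint_left]
    intro y hy hy'
    have h1 := (memU t y).1 hy j
    have h2 := (memU t' y).1 hy' j
    rw [if_pos rfl, hbj] at h1 h2
    have h3 : |(t : ℝ) - t'| < 1 := by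
      calc |(t : ℝ) - t'| ≤ |y j - (t:ℝ)| + |y j - (t':ℝ)| := by
            rw [abs_sub_comm (y j) (t:ℝ)]; exact abs_sub_le _ _ _ |>.trans_eq (by rw [abs_sub_comm])
        _ < 1 := by linarith
    have h4 : |t - t'| < 1 := by exact_mod_cast (by push_cast; exact h3 : |((t - t' : ℤ) : ℝ)| < 1)
    rw [abs_lt] at h4
    omega
  have hsub : ∀ t ∈ Finset.Icc (-(k:ℤ)) k,
      U t ⊆ Bx (Function.update b j ((2 * (k : ℝ) + 1) / 2)) := by
    intro t ht y hy i
    have hi := (memU t y).1 hy i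
    by_cases hij : i = j
    · subst hij
      rw [if_pos rfl, hbj] at hi
      rw [Function.update_self]
      have ht' : |(t : ℝ)| ≤ k := by
        rw [Finset.mem_Icc] at ht
        rw [abs_le]; constructor <;> [exact_mod_cast ht.1; exact_mod_cast ht.2]
      calc |y i| = |(y i - (t:ℝ)) + (t:ℝ)| := by ring_nf
        _ ≤ |y i - (t:ℝ)| + |(t:ℝ)| := abs_add_le _ _
        _ < (2 * (k:ℝ) + 1)/2 := by linarith
    · rw [if_neg hij, sub_zero] at hi
      rwa [Function.update_of_ne hij]
  have hcov : Bx (Function.update b j ((2 * (k : ℝ) + 1) / 2)) \ (⋃ t ∈ Finset.Icc (-(k:ℤ)) k, U t)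
      ⊆ ⋃ (t : ℤ), {y : Ee n | y j = (t : ℝ) + 1/2} := by
    rintro y ⟨hyB, hyU⟩
    set t0 : ℤ := round (y j) with ht0
    have hyj : |y j| < 2 * (k:ℝ) / 2 + 1/2 := by
      have := hyB j
      rw [Function.update_self] at this
      linarith [this]
    have habs : |y j - t0| ≤ 1/2 := by
      rw [ht0]; exact abs_sub_round (y j)
    have ht0mem : t0 ∈ Finset.Icc (-(k:ℤ)) k := by
      rw [Finset.mem_Icc, ht0, round_eq]
      rw [abs_lt] at hyj
      constructor
      · rw [Int.le_floor]; push_cast; linarith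
      · have : (⌊y j + 1/2⌋ : ℤ) < k + 1 := by
          rw [Int.floor_lt]; push_cast; linarith
        omega
    have hnotU : y ∉ U t0 := fun hy => hyU (Set.mem_biUnion ht0mem hy)
    rw [memU] at hnotU
    push_neg at hnotU
    obtain ⟨i, hi⟩ := hnotU
    by_cases hij : i = j
    · subst hij
      rw [if_pos rfl, hbj] at hi
      have : |y i - t0| = 1/2 := le_antisymm habs hi
      rcases abs_eq (by norm_num : (0:ℝ) ≤ 1/2) |>.1 this with h | h
      · exact Set.mem_iUnion.2 ⟨t0, by simp; linarith⟩
      · exact Set.mem_iUnion.2 ⟨t0 - 1, by push_cast; simp; linarith⟩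
    · rw [if_neg hij, sub_zero] at hi
      have := hyB i
      rw [Function.update_of_ne hij] at this
      exact absurd this (not_lt.2 hi)
  have hae : Bx (Function.update b j ((2 * (k : ℝ) + 1) / 2))
      =ᵐ[volume] ⋃ t ∈ Finset.Icc (-(k:ℤ)) k, U t := by
    rw [MeasureTheory.ae_eq_set]
    constructor
    · exact measure_mono_null hcov (measure_iUnion_null fun t => hyperplane_null n j _)
    · rw [Set.diff_eq_empty.2 (Set.iUnion₂_subset hsub)]; exact measure_empty
  calc ∫⁻ y in Bx (Function.update b j ((2 * (k : ℝ) + 1) / 2)), h y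
      = ∫⁻ y in ⋃ t ∈ Finset.Icc (-(k:ℤ)) k, U t, h y := setLIntegral_congr hae
    _ = ∑ t ∈ Finset.Icc (-(k:ℤ)) k, ∫⁻ y in U t, h y :=
        lintegral_biUnion_finset hdisj (fun t _ => hUmeas t) h
    _ = ∑ t ∈ Finset.Icc (-(k:ℤ)) k, ∫⁻ y in Bx b, h y := by
        refine Finset.sum_congr rfl fun t _ => ?_
        rw [hU_def]
        calc ∫⁻ y in (· - v t) ⁻¹' Bx b, h y = ∫⁻ y in Bx b, h (y + v t) :=
              translate_lintegral h hh (Bx b) (Bx_meas b) (v t)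
          _ = ∫⁻ y in Bx b, h y := by
              refine setLIntegral_congr_fun (Bx_meas b) ?_
              intro y _
              exact hper t y
    _ = (2 * k + 1 : ℝ≥0∞) * ∫⁻ y in Bx b, h y := by
        rw [Finset.sum_const, Int.card_Icc]
        have : (k + 1 - -(k:ℤ)).toNat = 2 * k + 1 := by omega
        rw [this, nsmul_eq_mul]
        push_cast
        ring

lemma tile_lemma {n : ℕ} (k : ℕ) (h : Ee n → ℝ≥0∞) (hh : Measurable h) (s : Finset (Fin n))
    (hper : ∀ j ∈ s, ∀ (t : ℤ) (y : Ee n), h (y + (t : ℝ) • EuclideanSpace.single j 1) = h y) :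
    ∫⁻ y in Bx (fun i => if i ∈ s then (2 * (k : ℝ) + 1) / 2 else 1 / 2), h y
      = (2 * k + 1 : ℝ≥0∞) ^ s.card * ∫⁻ y in Bx (fun _ => (1:ℝ) / 2), h y := by
  classical
  induction s using Finset.induction with
  | empty => simp
  | @insert j s hj ih =>
    have hb : (fun i => if i ∈ insert j s then (2 * (k : ℝ) + 1) / 2 else 1 / 2)
        = Function.update (fun i => if i ∈ s then (2 * (k : ℝ) + 1) / 2 else 1 / 2) j
            ((2 * (k : ℝ) + 1) / 2) := by
      funext i
      by_cases hij : i = j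
      · subst hij; simp [Function.update_self]
      · rw [Function.update_of_ne hij]
        simp [Finset.mem_insert, hij]
    rw [hb, step_lemma k h hh j (hper j (Finset.mem_insert_self j s)) _ (by simp [hj]),
      ih (fun j' hj' => hper j' (Finset.mem_insert_of_mem hj')),
      Finset.card_insert_of_notMem hj, pow_succ]
    ring

lemma scale_lintegral {n : ℕ} (c : ℝ) (hc : 0 < c) (H : Ee n → ℝ≥0∞) (hH : Measurable H)
    (T : Set (Ee n)) (hT : MeasurableSet T) :
    ∫⁻ x in T, H (c • x) = ENNReal.ofReal ((c ^ n)⁻¹) * ∫⁻ y in c • T, H y := by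
  have hc0 : c ≠ 0 := hc.ne'
  have hsmul_meas : MeasurableSet (c • T) := by
    have : c • T = (fun x : Ee n => c⁻¹ • x) ⁻¹' T := by
      ext x
      rw [Set.mem_smul_set_iff_inv_smul_mem₀ hc0, Set.mem_preimage]
    rw [this]
    exact hT.preimage (measurable_const_smul c⁻¹)
  have hpre : (fun x : Ee n => c • x) ⁻¹' (c • T) = T := by
    ext x
    rw [Set.mem_preimage, Set.smul_mem_smul_set_iff₀ hc0]
  have hmap : Measure.map (fun x : Ee n => c • x) volume
      = ENNReal.ofReal |(c ^ n)⁻¹| • volume := by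
    have := Measure.map_addHaar_smul (volume : Measure (Ee n)) hc0
    rwa [finrank_euclideanSpace_fin] at this
  have := setLIntegral_map (μ := (volume : Measure (Ee n))) hsmul_meas (f := H)
    hH (measurable_const_smul c)
  rw [hmap] at this
  rw [hpre] at this
  rw [← this, Measure.restrict_smul, lintegral_smul_measure,
    abs_of_nonneg (by positivity : (0:ℝ) ≤ (c ^ n)⁻¹), smul_eq_mul]

end Aux

lemma zper {N m : ℕ} (φ : Ee (N+1) → Ee m)
    (hφ_per : ∀ i : Fin (N+1), i ≠ Fin.last N → ∀ x, φ (x + EuclideanSpace.single i (1:ℝ)) = φ x)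
    (j : Fin (N+1)) (hj : j ≠ Fin.last N) :
    ∀ (t : ℤ) (y : Ee (N+1)), φ (y + (t : ℝ) • EuclideanSpace.single j 1) = φ y := by
  intro t
  induction t using Int.induction_on with
  | zero => intro y; norm_num
  | succ t ih =>
    intro y
    have ih' := ih y
    push_cast at ih' ⊢
    have h1 : ((t:ℝ) + 1) • EuclideanSpace.single j (1:ℝ)
        = (t:ℝ) • EuclideanSpace.single j (1:ℝ) + EuclideanSpace.single j (1:ℝ) := by
      rw [add_smul, one_smul]
    rw [h1, ← add_assoc, hφ_per j hj]
    exact ih'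
  | pred t ih =>
    intro y
    have ih' := ih y
    push_cast at ih' ⊢
    have h3 : (y + (-(t:ℝ) - 1) • EuclideanSpace.single j (1:ℝ)) + EuclideanSpace.single j 1
        = y + (-(t:ℝ)) • EuclideanSpace.single j 1 := by
      rw [add_assoc]
      congr 1
      have := (add_smul (-(t:ℝ) - 1) 1 (EuclideanSpace.single j (1:ℝ))).symm
      rw [one_smul] at this
      rw [this]
      norm_num
    calc φ (y + (-(t:ℝ) - 1) • EuclideanSpace.single j 1)
        = φ ((y + (-(t:ℝ) - 1) • EuclideanSpace.single j 1) + EuclideanSpace.single j 1) :=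
          (hφ_per j hj _).symm
      _ = φ (y + (-(t:ℝ)) • EuclideanSpace.single j 1) := by rw [h3]
      _ = φ y := ih'

lemma key_lintegral {N m : ℕ} (p : ℝ) (hp : 1 < p)
    (φ : Ee (N+1) → Ee m) (hφ_meas : Measurable φ)
    (hφ_per : ∀ i : Fin (N+1), i ≠ Fin.last N → ∀ x, φ (x + EuclideanSpace.single i (1:ℝ)) = φ x)
    (w : ℕ → Ee (N+1) → Ee m)
    (hw : ∀ k x, w k x = if |x (Fin.last N)| ≤ 1/(2*(2*(k:ℝ)+1))
      then ((2*(k:ℝ)+1) ^ (1/p)) • φ ((2*(k:ℝ)+1) • x) else 0)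
    (k : ℕ) :
    ∫⁻ x in Bx (fun _ => (1:ℝ)/2), (↑‖w k x‖₊ : ℝ≥0∞) ^ p
      = ∫⁻ x in Bx (fun _ => (1:ℝ)/2), (↑‖φ x‖₊ : ℝ≥0∞) ^ p := by
  have hp0 : (0:ℝ) < p := lt_trans one_pos hp
  have hpne : p ≠ 0 := hp0.ne'
  set c : ℝ := 2 * (k:ℝ) + 1 with hc_def
  have hc : 0 < c := by positivity
  have hc1 : (1:ℝ) ≤ c := by
    rw [hc_def]; have : (0:ℝ) ≤ (k:ℝ) := Nat.cast_nonneg k; linarith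
  set H : Ee (N+1) → ℝ≥0∞ := fun y => (↑‖φ y‖₊ : ℝ≥0∞) ^ p with hH_def
  have Hmeas : Measurable H := (hφ_meas.nnnorm.coe_nnreal_ennreal).pow_const p
  set S : Set (Ee (N+1)) := {x | |x (Fin.last N)| ≤ 1/(2*c)} with hS_def
  have hSmeas : MeasurableSet S := by
    have : S = (fun x : Ee (N+1) => |x (Fin.last N)|) ⁻¹' Set.Iic (1/(2*c)) := by
      ext x; simp [hS_def]
    rw [this]
    exact (((measurable_pi_apply (Fin.last N)).comp (WithLp.measurable_ofLp 2 _)).abs) measurableSet_Iic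
  have hQmeas : MeasurableSet (Bx (fun _ : Fin (N+1) => (1:ℝ)/2)) := Bx_meas _
  -- pointwise rewriting of the integrand
  have hptw : ∀ x, (↑‖w k x‖₊ : ℝ≥0∞) ^ p
      = S.indicator (fun x => ENNReal.ofReal c * H (c • x)) x := by
    intro x
    rw [hw k x]
    by_cases hx : x ∈ S
    · rw [Set.indicator_of_mem hx, if_pos (by rw [hS_def] at hx; rw [← hc_def]; exact hx)]
      rw [← hc_def, nnnorm_smul]
      push_cast
      rw [ENNReal.mul_rpow_of_nonneg _ _ hp0.le]
      congr 1
      change ‖c ^ (1 / p)‖ₑ ^ p = _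
      rw [Real.enorm_eq_ofReal (by positivity), ENNReal.ofReal_rpow_of_pos (by positivity),
        ← Real.rpow_mul hc.le, one_div_mul_cancel hpne, Real.rpow_one]
    · rw [Set.indicator_of_notMem hx,
        if_neg (by rw [hS_def] at hx; rw [← hc_def]; exact hx)]
      simp [ENNReal.zero_rpow_of_pos hp0]
  -- the rescaled big box
  classical
  set s0 : Finset (Fin (N+1)) := Finset.univ.erase (Fin.last N) with hs0_def
  set bfull : Fin (N+1) → ℝ := fun i => if i ∈ s0 then (2 * (k:ℝ) + 1)/2 else 1/2 with hbfull_def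
  have hmem : ∀ y : Ee (N+1), y ∈ c • (S ∩ Bx (fun _ => (1:ℝ)/2))
      ↔ (|y (Fin.last N)| ≤ 1/2 ∧ ∀ i, |y i| < c/2) := by
    intro y
    rw [Set.mem_smul_set_iff_inv_smul_mem₀ hc.ne']
    simp only [Set.mem_inter_iff, hS_def, Set.mem_setOf_eq, Bx, PiLp.smul_apply, smul_eq_mul]
    have habs : ∀ a : ℝ, |c⁻¹ * a| = |a| / c := fun a => by
      rw [abs_mul, abs_inv, abs_of_pos hc, inv_mul_eq_div]
    constructor
    · rintro ⟨h1, h2⟩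
      rw [habs] at h1
      rw [div_le_iff₀ hc] at h1
      constructor
      · calc |y (Fin.last N)| ≤ 1/(2*c) * c := h1
          _ = 1/2 := by field_simp; try ring
      · intro i
        have := h2 i
        rw [habs, div_lt_iff₀ hc] at this
        calc |y i| < 1/2 * c := this
          _ = c/2 := by ring
    · rintro ⟨h1, h2⟩
      constructor
      · rw [habs, div_le_iff₀ hc]
        calc |y (Fin.last N)| ≤ 1/2 := h1
          _ = 1/(2*c) * c := by field_simp; try ring
      · intro i
        rw [habs, div_lt_iff₀ hc]
        calc |y i| < c/2 := h2 i
          _ = 1/2 * c := by ring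
  have hae : c • (S ∩ Bx (fun _ => (1:ℝ)/2)) =ᵐ[volume] Bx bfull := by
    rw [MeasureTheory.ae_eq_set]
    constructor
    · refine measure_mono_null ?_
        (measure_union_null (hyperplane_null (N+1) (Fin.last N) (1/2))
          (hyperplane_null (N+1) (Fin.last N) (-(1/2))))
      rintro y ⟨hy1, hy2⟩
      rw [hmem] at hy1
      have hfail : ¬ (∀ i, |y i| < bfull i) := hy2
      push_neg at hfail
      obtain ⟨i, hi⟩ := hfail
      by_cases hil : i = Fin.last N
      · subst hil
        rw [hbfull_def] at hi
        simp only [hs0_def, Finset.mem_erase, ne_eq, not_true_eq_false, false_and,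
          if_false] at hi
        have : |y (Fin.last N)| = 1/2 := le_antisymm hy1.1 hi
        rcases (abs_eq (by norm_num : (0:ℝ) ≤ 1/2)).1 this with h | h
        · exact Or.inl h
        · exact Or.inr h
      · exfalso
        rw [hbfull_def] at hi
        simp only [hs0_def, Finset.mem_erase, ne_eq, hil, not_false_eq_true, true_and,
          Finset.mem_univ, if_true] at hi
        have := hy1.2 i
        rw [← hc_def] at hi
        linarith
    · have hsub : Bx bfull ⊆ c • (S ∩ Bx (fun _ => (1:ℝ)/2)) := by
        intro y hy
        rw [hmem]
        constructor
        · have := hy (Fin.last N)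
          rw [hbfull_def] at this
          simp only [hs0_def, Finset.mem_erase, ne_eq, not_true_eq_false, false_and,
            if_false] at this
          linarith
        · intro i
          have := hy i
          rw [hbfull_def] at this
          by_cases hil : i = Fin.last N
          · subst hil
            simp only [hs0_def, Finset.mem_erase, ne_eq, not_true_eq_false, false_and,
              if_false] at this
            linarith
          · simp only [hs0_def, Finset.mem_erase, ne_eq, hil, not_false_eq_true, true_and,
              Finset.mem_univ, if_true] at this
            rw [← hc_def] at this
            exact this
      rw [Set.diff_eq_empty.2 hsub]
      exact measure_empty
  have hcard : s0.card = N := by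
    rw [hs0_def, Finset.card_erase_of_mem (Finset.mem_univ _), Finset.card_univ,
      Fintype.card_fin]
    rfl
  have htile : ∫⁻ y in Bx bfull, H y
      = (2 * k + 1 : ℝ≥0∞) ^ N * ∫⁻ y in Bx (fun _ => (1:ℝ)/2), H y := by
    have h := tile_lemma k H Hmeas s0 (fun j hj t y => by
      simp only [hH_def]
      rw [zper φ hφ_per j (Finset.mem_erase.1 hj).1 t y])
    rw [hcard] at h
    rw [hbfull_def]
    exact h
  have hscal : ENNReal.ofReal c * (ENNReal.ofReal ((c ^ (N+1))⁻¹) * (2 * k + 1 : ℝ≥0∞) ^ N)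
      = 1 := by
    have hofc : (2 * k + 1 : ℝ≥0∞) = ENNReal.ofReal c := by
      rw [hc_def]
      rw [ENNReal.ofReal_add (by positivity) (by norm_num), ENNReal.ofReal_mul (by norm_num)]
      norm_num [ENNReal.ofReal_natCast]
    rw [hofc, ← ENNReal.ofReal_pow hc.le, ← ENNReal.ofReal_mul (by positivity),
      ← ENNReal.ofReal_mul hc.le]
    rw [show ((c ^ (N+1))⁻¹ * c ^ N) = c⁻¹ by field_simp [pow_succ]; try ring]
    rw [mul_inv_cancel₀ hc.ne']
    exact ENNReal.ofReal_one
  calc ∫⁻ x in Bx (fun _ => (1:ℝ)/2), (↑‖w k x‖₊ : ℝ≥0∞) ^ p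
      = ∫⁻ x in Bx (fun _ => (1:ℝ)/2), S.indicator (fun x => ENNReal.ofReal c * H (c • x)) x := by
        exact lintegral_congr fun x => hptw x
    _ = ∫⁻ x in S ∩ Bx (fun _ => (1:ℝ)/2), ENNReal.ofReal c * H (c • x) := by
        rw [lintegral_indicator hSmeas, Measure.restrict_restrict hSmeas]
    _ = ENNReal.ofReal c * ∫⁻ x in S ∩ Bx (fun _ => (1:ℝ)/2), H (c • x) := by
        exact lintegral_const_mul _ (Hmeas.comp (measurable_const_smul c))
    _ = ENNReal.ofReal c * (ENNReal.ofReal ((c ^ (N+1))⁻¹)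
          * ∫⁻ y in c • (S ∩ Bx (fun _ => (1:ℝ)/2)), H y) := by
        rw [scale_lintegral c hc H Hmeas _ (hSmeas.inter hQmeas)]
    _ = ENNReal.ofReal c * (ENNReal.ofReal ((c ^ (N+1))⁻¹) * ∫⁻ y in Bx bfull, H y) := by
        rw [setLIntegral_congr hae]
    _ = ENNReal.ofReal c * (ENNReal.ofReal ((c ^ (N+1))⁻¹)
          * ((2 * k + 1 : ℝ≥0∞) ^ N * ∫⁻ y in Bx (fun _ => (1:ℝ)/2), H y)) := by
        rw [htile]
    _ = ∫⁻ x in Bx (fun _ => (1:ℝ)/2), (↑‖φ x‖₊ : ℝ≥0∞) ^ p := by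
        rw [(show ∀ A B C I : ℝ≥0∞, A * (B * (C * I)) = (A * (B * C)) * I from
          fun A B C I => by ring), hscal, one_mul]

/-- the concentrating rescaled sequence
`w_k(x) = (2k+1)^{1/p} φ((2k+1)x)` on the strip `{|x_N| ≤ 1/(2(2k+1))}`, `0` outside,
is bounded in `L^p(Q;ℝ^m)` and converges weakly to `0` in `L^p(Q;ℝ^m)`. -/
theorem concentrating_sequence_weak_null {N m : ℕ} (p : ℝ) (hp : 1 < p)
    (Q : Set (EuclideanSpace ℝ (Fin (N + 1))))
    (hQ : Q = {x : EuclideanSpace ℝ (Fin (N + 1)) | ∀ i, |x i| < 1 / 2})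
    (φ : EuclideanSpace ℝ (Fin (N + 1)) → EuclideanSpace ℝ (Fin m))
    (hφ_meas : Measurable φ)
    (hφ_Lp : MemLp φ (ENNReal.ofReal p) (volume.restrict Q))
    (hφ_mean : (∫ x in Q, φ x) = 0)
    -- 1-periodicity in the first N variables
    (hφ_per : ∀ i : Fin (N + 1), i ≠ Fin.last N →
      ∀ x, φ (x + EuclideanSpace.single i (1 : ℝ)) = φ x)
    (w : ℕ → EuclideanSpace ℝ (Fin (N + 1)) → EuclideanSpace ℝ (Fin m))
    (hw : ∀ k x, w k x =
      if |x (Fin.last N)| ≤ 1 / (2 * (2 * (k : ℝ) + 1)) then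
        ((2 * (k : ℝ) + 1) ^ (1 / p)) • φ ((2 * (k : ℝ) + 1) • x)
      else 0) :
    (∃ Cb : ℝ, ∀ k, (∫ x in Q, ‖w k x‖ ^ p) ≤ Cb) ∧
      ∀ g : EuclideanSpace ℝ (Fin (N + 1)) → EuclideanSpace ℝ (Fin m),
        MemLp g (ENNReal.ofReal (p / (p - 1))) (volume.restrict Q) →
        Tendsto (fun k => ∫ x in Q, ⟪w k x, g x⟫) atTop (nhds 0) := by
  subst hQ
  have hp0 : (0:ℝ) < p := lt_trans one_pos hp
  have hpne : p ≠ 0 := hp0.ne'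
  have hQB : {x : EuclideanSpace ℝ (Fin (N+1)) | ∀ i, |x i| < 1/2}
      = Bx (fun _ => (1:ℝ)/2) := rfl
  rw [hQB] at hφ_Lp ⊢
  have hLφ_lt : (∫⁻ x in Bx (fun _ : Fin (N+1) => (1:ℝ)/2), (↑‖φ x‖₊ : ℝ≥0∞) ^ p) < ∞ := by
    have := lintegral_rpow_enorm_lt_top_of_eLpNorm_lt_top (f := φ)
      (p := ENNReal.ofReal p) (μ := volume.restrict (Bx (fun _ : Fin (N+1) => (1:ℝ)/2)))
      (by simp only [ne_eq, ENNReal.ofReal_eq_zero, not_le]; linarith)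
      ENNReal.ofReal_ne_top hφ_Lp.2
    rwa [ENNReal.toReal_ofReal hp0.le] at this
  have hwmeas : ∀ k : ℕ, Measurable (w k) := by
    intro k
    have hfk : w k = fun x => if |x (Fin.last N)| ≤ 1/(2*(2*(k:ℝ)+1))
        then ((2*(k:ℝ)+1) ^ (1/p)) • φ ((2*(k:ℝ)+1) • x) else 0 := funext (hw k)
    rw [hfk]
    refine Measurable.ite ?_ ?_ measurable_const
    · exact measurableSet_le
        ((((measurable_pi_apply (Fin.last N)).comp (WithLp.measurable_ofLp 2 _) :
          Measurable fun x : Ee (N+1) => x (Fin.last N))).abs) measurable_const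
    · exact ((hφ_meas.comp (measurable_const_smul _)).fun_const_smul _)
  constructor
  · refine ⟨(∫⁻ x in Bx (fun _ : Fin (N+1) => (1:ℝ)/2), (↑‖φ x‖₊ : ℝ≥0∞) ^ p).toReal,
      fun k => ?_⟩
    have h1 : ∫ x in Bx (fun _ : Fin (N+1) => (1:ℝ)/2), ‖w k x‖ ^ p
        = (∫⁻ x in Bx (fun _ : Fin (N+1) => (1:ℝ)/2), (↑‖w k x‖₊ : ℝ≥0∞) ^ p).toReal := by
      rw [integral_eq_lintegral_of_nonneg_ae]
      · congr 1
        apply lintegral_congr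
        intro x
        change _ = ‖w k x‖ₑ ^ p
        rw [← ofReal_norm, ← ENNReal.ofReal_rpow_of_nonneg (norm_nonneg _) hp0.le]
      · filter_upwards with x
        positivity
      · exact (((hwmeas k).norm).pow_const p).aestronglyMeasurable
    rw [h1, key_lintegral p hp φ hφ_meas hφ_per w hw k]
  · intro g hg
    set q : ℝ := p / (p - 1) with hq_def
    have hpq : p.HolderConjugate q := (Real.holderConjugate_iff_eq_conjExponent hp).2 rfl
    have hq0 : 0 < q := hpq.symm.pos
    set Lphi := ∫⁻ x in Bx (fun _ : Fin (N+1) => (1:ℝ)/2), (↑‖φ x‖₊ : ℝ≥0∞) ^ p with hL_def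
    set G : Ee (N+1) → ℝ≥0∞ := fun x => (↑‖g x‖₊ : ℝ≥0∞) ^ q with hG_def
    have hGlt : (∫⁻ x in Bx (fun _ : Fin (N+1) => (1:ℝ)/2), G x) < ∞ := by
      have := lintegral_rpow_enorm_lt_top_of_eLpNorm_lt_top (f := g)
        (p := ENNReal.ofReal q) (μ := volume.restrict (Bx (fun _ : Fin (N+1) => (1:ℝ)/2)))
        (by simp only [ne_eq, ENNReal.ofReal_eq_zero, not_le]; linarith)
        ENNReal.ofReal_ne_top hg.2
      rw [ENNReal.toReal_ofReal hq0.le] at this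
      exact this
    set Sk : ℕ → Set (Ee (N+1)) :=
      fun k => {x | |x (Fin.last N)| ≤ 1/(2*(2*(k:ℝ)+1))} with hSk_def
    have hSkmeas : ∀ k, MeasurableSet (Sk k) := fun k =>
      measurableSet_le
        ((((measurable_pi_apply (Fin.last N)).comp (WithLp.measurable_ofLp 2 _) :
          Measurable fun x : Ee (N+1) => x (Fin.last N))).abs) measurable_const
    set A : ℕ → ℝ≥0∞ :=
      fun k => ∫⁻ x in Sk k, G x ∂(volume.restrict (Bx (fun _ : Fin (N+1) => (1:ℝ)/2)))
      with hA_def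
    have hAle : ∀ k, A k ≤ ∫⁻ x in Bx (fun _ : Fin (N+1) => (1:ℝ)/2), G x := by
      intro k
      rw [hA_def]
      exact lintegral_mono' (Measure.restrict_le_self) le_rfl
    have hAtend : Tendsto A atTop (nhds 0) := by
      set ν := (volume.restrict (Bx (fun _ : Fin (N+1) => (1:ℝ)/2))).withDensity G with hν_def
      have hνS : ∀ k, ν (Sk k) = A k := fun k => withDensity_apply G (hSkmeas k)
      have hνfin : ν Set.univ ≠ ∞ := by
        rw [hν_def, withDensity_apply G MeasurableSet.univ, Measure.restrict_univ]
        exact hGlt.ne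
      have hanti : Antitone Sk := by
        intro k k' hkk' x hx
        simp only [hSk_def, Set.mem_setOf_eq] at hx ⊢
        refine le_trans hx ?_
        have : (k:ℝ) ≤ k' := Nat.cast_le.2 hkk'
        apply one_div_le_one_div_of_le (by positivity)
        linarith
      have hint : (⋂ k, Sk k) ⊆ {x : Ee (N+1) | x (Fin.last N) = 0} := by
        intro x hx
        simp only [Set.mem_iInter, hSk_def, Set.mem_setOf_eq] at hx
        by_contra hne
        have habs : 0 < |x (Fin.last N)| := abs_pos.2 hne
        obtain ⟨n, hn⟩ := exists_nat_gt (1/(2 * |x (Fin.last N)|))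
        have h2 := hx n
        have h3 : 1/(2*(2*(n:ℝ)+1)) < |x (Fin.last N)| := by
          rw [div_lt_iff₀ (by positivity)]
          rw [div_lt_iff₀ (by positivity)] at hn
          nlinarith [(Nat.cast_nonneg n : (0:ℝ) ≤ n)]
        linarith
      have hhypmeas : MeasurableSet {x : Ee (N+1) | x (Fin.last N) = 0} :=
        ((measurable_pi_apply (Fin.last N)).comp (WithLp.measurable_ofLp 2 _) :
          Measurable fun x : Ee (N+1) => x (Fin.last N)) (measurableSet_singleton 0)
      have hν0 : ν (⋂ k, Sk k) = 0 := by
        refine le_antisymm (le_trans (measure_mono hint) ?_) zero_le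
        rw [hν_def, withDensity_apply G hhypmeas]
        have hz : (volume.restrict (Bx (fun _ : Fin (N+1) => (1:ℝ)/2)))
            {x : Ee (N+1) | x (Fin.last N) = 0} = 0 :=
          le_antisymm (le_trans (Measure.restrict_le_self _)
            (le_of_eq (hyperplane_null _ _ _))) zero_le
        exact le_of_eq (setLIntegral_measure_zero _ _ hz)
      have htd := tendsto_measure_iInter_atTop (μ := ν)
        (fun k => (hSkmeas k).nullMeasurableSet) hanti
        ⟨0, by rw [hνS]; exact (lt_of_le_of_lt (hAle 0) hGlt).ne⟩
      rw [hν0] at htd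
      have : Tendsto (fun k => ν (Sk k)) atTop (nhds 0) := htd
      simpa only [hνS] using this
    have hbound : ∀ k, ‖∫ x in Bx (fun _ : Fin (N+1) => (1:ℝ)/2), ⟪w k x, g x⟫‖
        ≤ (Lphi ^ (1/p) * A k ^ (1/q)).toReal := by
      intro k
      have hptw : ∀ x, ENNReal.ofReal ‖⟪w k x, g x⟫‖
          ≤ ((↑‖w k x‖₊ : ℝ≥0∞) * (Sk k).indicator (fun x => (↑‖g x‖₊ : ℝ≥0∞)) x) := by
        intro x
        by_cases hx : x ∈ Sk k
        · rw [Set.indicator_of_mem hx]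
          calc ENNReal.ofReal ‖⟪w k x, g x⟫‖ ≤ ENNReal.ofReal (‖w k x‖ * ‖g x‖) := by
                apply ENNReal.ofReal_le_ofReal
                rw [Real.norm_eq_abs]
                exact abs_real_inner_le_norm _ _
            _ = _ := by
                rw [ENNReal.ofReal_mul (norm_nonneg _), ofReal_norm,
                  ofReal_norm]
                rfl
        · have hx' : ¬ (|x (Fin.last N)| ≤ 1/(2*(2*(k:ℝ)+1))) := hx
          have hzero : w k x = 0 := by rw [hw k x, if_neg hx']
          rw [Set.indicator_of_notMem hx, hzero]
          simp
      have hchain : (∫⁻ x in Bx (fun _ : Fin (N+1) => (1:ℝ)/2), ENNReal.ofReal ‖⟪w k x, g x⟫‖)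
          ≤ Lphi ^ (1/p) * A k ^ (1/q) := by
        calc (∫⁻ x in Bx (fun _ : Fin (N+1) => (1:ℝ)/2), ENNReal.ofReal ‖⟪w k x, g x⟫‖)
            ≤ ∫⁻ x in Bx (fun _ : Fin (N+1) => (1:ℝ)/2),
                (↑‖w k x‖₊ : ℝ≥0∞) * (Sk k).indicator (fun x => (↑‖g x‖₊ : ℝ≥0∞)) x :=
              lintegral_mono hptw
          _ ≤ (∫⁻ x in Bx (fun _ : Fin (N+1) => (1:ℝ)/2), (↑‖w k x‖₊ : ℝ≥0∞) ^ p) ^ (1/p)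
              * (∫⁻ x in Bx (fun _ : Fin (N+1) => (1:ℝ)/2),
                  ((Sk k).indicator (fun x => (↑‖g x‖₊ : ℝ≥0∞)) x) ^ q) ^ (1/q) :=
              ENNReal.lintegral_mul_le_Lp_mul_Lq _ hpq
                ((hwmeas k).nnnorm.coe_nnreal_ennreal.aemeasurable)
                (hg.aestronglyMeasurable.enorm.indicator (hSkmeas k))
          _ = Lphi ^ (1/p) * A k ^ (1/q) := by
              congr 1
              · rw [key_lintegral p hp φ hφ_meas hφ_per w hw k]
              · congr 1
                have hind : ∀ x, ((Sk k).indicator (fun x => (↑‖g x‖₊ : ℝ≥0∞)) x) ^ q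
                    = (Sk k).indicator G x := by
                  intro x
                  by_cases hx : x ∈ Sk k
                  · rw [Set.indicator_of_mem hx, Set.indicator_of_mem hx]
                  · rw [Set.indicator_of_notMem hx, Set.indicator_of_notMem hx,
                      ENNReal.zero_rpow_of_pos hq0]
                rw [lintegral_congr hind, lintegral_indicator (hSkmeas k)]
      have hne : Lphi ^ (1/p) * A k ^ (1/q) ≠ ∞ := by
        apply ENNReal.mul_ne_top
        · exact (ENNReal.rpow_lt_top_of_nonneg (by positivity) hLφ_lt.ne).ne
        · exact (ENNReal.rpow_lt_top_of_nonneg (by positivity)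
            (lt_of_le_of_lt (hAle k) hGlt).ne).ne
      calc ‖∫ x in Bx (fun _ : Fin (N+1) => (1:ℝ)/2), ⟪w k x, g x⟫‖
          ≤ (∫⁻ x in Bx (fun _ : Fin (N+1) => (1:ℝ)/2), ENNReal.ofReal ‖⟪w k x, g x⟫‖).toReal :=
            norm_integral_le_lintegral_norm _
        _ ≤ _ := ENNReal.toReal_mono hne hchain
    have hBtend : Tendsto (fun k => (Lphi ^ (1/p) * A k ^ (1/q)).toReal) atTop (nhds 0) := by
      have h1 : ∀ k, (Lphi ^ (1/p) * A k ^ (1/q)).toReal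
          = (Lphi ^ (1/p)).toReal * ((A k).toReal) ^ (1/q) := by
        intro k
        rw [ENNReal.toReal_mul, ENNReal.toReal_rpow]
      simp only [h1]
      have hAr : Tendsto (fun k => (A k).toReal) atTop (nhds 0) := by
        have := (ENNReal.tendsto_toReal (by simp : (0:ℝ≥0∞) ≠ ∞)).comp hAtend
        simpa [Function.comp_def] using this
      have h2 := hAr.rpow_const (Or.inr (by positivity : (0:ℝ) ≤ 1/q))
      rw [Real.zero_rpow (by positivity : (1:ℝ)/q ≠ 0)] at h2
      simpa using h2.const_mul ((Lphi ^ (1/p)).toReal)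
    exact squeeze_zero_norm hbound hBtend
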